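/- Let (B, 𝕋, ω) be a C*-dynamical system with B ⊆ B(H), and let A be a maximal (abelian 𝕋-invariant *-subalgebra) of B. If every spectral component π_n(b) of every b ∈ A′ ∩ B lies in A, then A′ ∩ B ⊆ A″; in particular A′ ∩ B is abelian. -/

import Mathlib

open scoped ComplexConjugate

/-- Let `B ⊆ B(H)` be a C*-algebra of operators with circle action `ω`, and let
`A ≤ B` be a maximal (abelian `𝕋`-invariant *-subalgebra) of `B`. If every
spectral component `π_n(b)` of every `b ∈ A' ∩ B` lies in `A`, then
`A' ∩ B ⊆ A''`; in particular `A' ∩ B` is abelian. -/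
theorem commutant_subset_double_commutant
    {H : Type*} [NormedAddCommGroup H] [InnerProductSpace ℂ H] [CompleteSpace H]
    (B : StarSubalgebra ℂ (H →L[ℂ] H))
    (hBclosed : IsClosed (B : Set (H →L[ℂ] H)))
    (ω : Circle → B ≃⋆ₐ[ℂ] B)
    (hω : ∀ s t : Circle, ∀ b : B, ω (s * t) b = ω s (ω t b))
    (hωcont : ∀ b : B, Continuous fun t : Circle => ((ω t b : B) : H →L[ℂ] H))
    (A : StarSubalgebra ℂ (H →L[ℂ] H)) (hAB : A ≤ B)
    (hab : ∀ a ∈ A, ∀ a' ∈ A, a * a' = a' * a)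
    (hA : ∀ t : Circle, ∀ b : B, (b : H →L[ℂ] H) ∈ A → ((ω t b : B) : H →L[ℂ] H) ∈ A)
    (hmax : ∀ A' : StarSubalgebra ℂ (H →L[ℂ] H), A' ≤ B →
      (∀ a ∈ A', ∀ a' ∈ A', a * a' = a' * a) →
      (∀ t : Circle, ∀ b : B, (b : H →L[ℂ] H) ∈ A' → ((ω t b : B) : H →L[ℂ] H) ∈ A') →
      A ≤ A' → A' = A)
    (hspec : ∀ b : B, (∀ a ∈ A, a * (b : H →L[ℂ] H) = (b : H →L[ℂ] H) * a) →
      ∀ n : ℤ,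
        ((2 * Real.pi)⁻¹ •
          ∫ θ in (0:ℝ)..(2 * Real.pi),
            Complex.exp (-(n : ℂ) * θ * Complex.I) •
              ((ω (Circle.exp θ) b : B) : H →L[ℂ] H)) ∈ A) :
    ∀ b : B, (∀ a ∈ A, a * (b : H →L[ℂ] H) = (b : H →L[ℂ] H) * a) →
      ∀ c : H →L[ℂ] H, (∀ a ∈ A, a * c = c * a) →
        (b : H →L[ℂ] H) * c = c * (b : H →L[ℂ] H) := by
  have hπ : (0:ℝ) < 2 * Real.pi := by positivity
  haveI : Fact (0 < 2 * Real.pi) := ⟨hπ⟩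
  intro b hb c hc
  have hω1 : ∀ x : B, ω 1 x = x := by
    intro x
    have h := hω 1 1 x
    rw [one_mul] at h
    exact ((ω 1).injective h).symm
  ext η
  apply ext_inner_left ℂ
  intro ξ
  set Φ : (H →L[ℂ] H) →L[ℂ] ℂ :=
    ((innerSL ℂ ξ).comp (ContinuousLinearMap.apply ℂ H (c η))) -
      ((innerSL ℂ (ContinuousLinearMap.adjoint c ξ)).comp
        (ContinuousLinearMap.apply ℂ H η)) with hΦdef
  have hΦ : ∀ T : H →L[ℂ] H, Φ T = inner ℂ ξ (T (c η)) - inner ℂ ξ (c (T η)) := by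
    intro T
    simp [hΦdef, ContinuousLinearMap.adjoint_inner_left]
  have hΦA : ∀ a ∈ A, Φ a = 0 := by
    intro a ha
    have h1 : a (c η) = c (a η) := by
      have := hc a ha
      calc a (c η) = (a * c) η := rfl
        _ = (c * a) η := by rw [this]
        _ = c (a η) := rfl
    rw [hΦ, h1, sub_self]
  -- the continuous function on the circle
  set g : AddCircle (2 * Real.pi) → ℂ :=
    fun x => Φ ((ω (AddCircle.toCircle x) b : B) : H →L[ℂ] H) with hgdef
  have hgcont : Continuous g :=
    Φ.continuous.comp ((hωcont b).comp AddCircle.continuous_toCircle)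
  have hgcoe : ∀ θ : ℝ, g θ = Φ ((ω (Circle.exp θ) b : B) : H →L[ℂ] H) := by
    intro θ
    have h2 : (2 * Real.pi) / (2 * Real.pi) * θ = θ := by
      rw [div_self hπ.ne', one_mul]
    show Φ ((ω (AddCircle.toCircle (θ : AddCircle (2 * Real.pi))) b : B) : H →L[ℂ] H) = _
    rw [AddCircle.toCircle_apply_mk, h2]
  have key : ∀ n : ℤ, fourierCoeff g n = 0 := by
    intro n
    have hcont : Continuous fun θ : ℝ =>
        Complex.exp (-(n : ℂ) * θ * Complex.I) • ((ω (Circle.exp θ) b : B) : H →L[ℂ] H) := by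
      apply Continuous.smul (f := fun θ : ℝ => Complex.exp (-(n : ℂ) * θ * Complex.I))
        (g := fun θ : ℝ => ((ω (Circle.exp θ) b : B) : H →L[ℂ] H))
      · exact Complex.continuous_exp.comp
          ((continuous_const.mul Complex.continuous_ofReal).mul continuous_const)
      · exact (hωcont b).comp Circle.exp.continuous
    have hint : IntervalIntegrable _ MeasureTheory.volume (0 : ℝ) (2 * Real.pi) :=
      hcont.intervalIntegrable (0 : ℝ) (2 * Real.pi)
    have heq : ∀ x : ℝ, (fourier (-n) (x : AddCircle (2 * Real.pi)) : ℂ) • g x =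
        Φ (Complex.exp (-(n : ℂ) * x * Complex.I) •
          ((ω (Circle.exp x) b : B) : H →L[ℂ] H)) := by
      intro x
      rw [hgcoe, Φ.map_smul, fourier_coe_apply, smul_eq_mul, smul_eq_mul]
      congr 2
      have hπC : (Real.pi : ℂ) ≠ 0 := by exact_mod_cast Real.pi_ne_zero
      push_cast
      field_simp
    have h0 := hΦA _ (hspec b hb n)
    rw [ContinuousLinearMap.map_smul_of_tower] at h0
    rw [fourierCoeff_eq_intervalIntegral g n 0, zero_add]
    calc (1 / (2 * Real.pi)) • ∫ x in (0:ℝ)..(2 * Real.pi),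
          (fourier (-n) (x : AddCircle (2 * Real.pi)) : ℂ) • g x
        = (1 / (2 * Real.pi)) • ∫ x in (0:ℝ)..(2 * Real.pi),
          Φ (Complex.exp (-(n : ℂ) * x * Complex.I) •
            ((ω (Circle.exp x) b : B) : H →L[ℂ] H)) := by
          congr 1
          exact intervalIntegral.integral_congr fun x _ => heq x
      _ = (1 / (2 * Real.pi)) • Φ (∫ x in (0:ℝ)..(2 * Real.pi),
            Complex.exp (-(n : ℂ) * x * Complex.I) •
              ((ω (Circle.exp x) b : B) : H →L[ℂ] H)) := by
          rw [Φ.intervalIntegral_comp_comm hint]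
      _ = 0 := by rw [one_div, h0]
  set G : C(AddCircle (2 * Real.pi), ℂ) := ⟨g, hgcont⟩ with hGdef
  have hsummable : Summable (fourierCoeff (G : AddCircle (2 * Real.pi) → ℂ)) := by
    have : fourierCoeff (G : AddCircle (2 * Real.pi) → ℂ) = fun _ => 0 := funext key
    rw [this]
    exact summable_zero
  have hG0 : G = 0 := by
    have h1 := hasSum_fourier_series_of_summable hsummable
    have h2 : (fun i : ℤ => fourierCoeff (G : AddCircle (2 * Real.pi) → ℂ) i • fourier i)
        = fun _ : ℤ => (0 : C(AddCircle (2 * Real.pi), ℂ)) := by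
      funext i
      show fourierCoeff g i • fourier i = 0
      rw [key i, zero_smul]
    rw [h2] at h1
    exact (hasSum_zero.unique h1).symm
  have hg0 : g ((0:ℝ) : AddCircle (2 * Real.pi)) = 0 := by
    rw [show g ((0:ℝ) : AddCircle (2 * Real.pi)) = G ((0:ℝ) : AddCircle (2 * Real.pi)) from rfl,
      hG0]
    rfl
  rw [hgcoe 0, Circle.exp_zero, hω1 b] at hg0
  have := hΦ (b : H →L[ℂ] H)
  rw [hg0] at this
  have hfin : inner ℂ ξ ((b : H →L[ℂ] H) (c η)) = (inner ℂ ξ (c ((b : H →L[ℂ] H) η)) : ℂ) :=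
    sub_eq_zero.mp this.symm
  simpa [ContinuousLinearMap.mul_apply] using hfin
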